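/- Let F : L^∞(0,1) → L^∞(0,1) be the nonlinear operator [F(u)](x) = exp((Gu)(x)). If (u_n) is a bounded sequence in L^∞(0,1), u ∈ L^∞(0,1), and ∫_0^1 u_n v → ∫_0^1 u v for every v ∈ L¹(0,1) (i.e., u_n converges weakly-* to u in L^∞(0,1) = (L¹(0,1))*), then ‖F(u_n) − F(u)‖_∞ → 0 as n → ∞. In particular, F is weak-*-to-weak sequentially continuous. -/

import Mathlib

open MeasureTheory Filter Topology

lemma exp_lip_aux {a b M : ℝ} (hab : b ≤ a) (ha : a ≤ M) :
    Real.exp a - Real.exp b ≤ Real.exp M * (a - b) := by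
  have h1 : Real.exp (a - b) * (1 - (a - b)) ≤ 1 := by
    have := Real.add_one_le_exp (-(a - b))
    calc Real.exp (a - b) * (1 - (a - b)) ≤ Real.exp (a - b) * Real.exp (-(a - b)) := by
          apply mul_le_mul_of_nonneg_left (by linarith) (Real.exp_pos _).le
      _ = 1 := by rw [← Real.exp_add]; simp
  have h2 : Real.exp (a - b) - 1 ≤ (a - b) * Real.exp (a - b) := by nlinarith
  have h3 : Real.exp a - Real.exp b = Real.exp b * (Real.exp (a - b) - 1) := by
    rw [mul_sub, ← Real.exp_add]; ring_nf
  have h4 : Real.exp b * (Real.exp (a - b) - 1) ≤ Real.exp b * ((a - b) * Real.exp (a - b)) :=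
    mul_le_mul_of_nonneg_left h2 (Real.exp_pos _).le
  have h5 : Real.exp b * ((a - b) * Real.exp (a - b)) = (a - b) * Real.exp a := by
    have he : Real.exp b * Real.exp (a - b) = Real.exp a := by rw [← Real.exp_add]; ring_nf
    nlinarith [he]
  have h6 : (a - b) * Real.exp a ≤ (a - b) * Real.exp M :=
    mul_le_mul_of_nonneg_left (Real.exp_le_exp.2 ha) (by linarith)
  linarith

lemma exp_lip {a b M : ℝ} (ha : a ≤ M) (hb : b ≤ M) :
    |Real.exp a - Real.exp b| ≤ Real.exp M * |a - b| := by
  rcases le_total b a with h | h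
  · rw [abs_of_nonneg (by linarith [Real.exp_le_exp.2 h] : (0:ℝ) ≤ Real.exp a - Real.exp b),
      abs_of_nonneg (by linarith)]
    exact exp_lip_aux h ha
  · rw [abs_sub_comm, abs_sub_comm a b,
      abs_of_nonneg (by linarith [Real.exp_le_exp.2 h] : (0:ℝ) ≤ Real.exp b - Real.exp a),
      abs_of_nonneg (by linarith)]
    exact exp_lip_aux h hb

theorem exponential_forward_operator_weakstar_continuous
    (C : ℝ) (u : ℕ → ℝ → ℝ) (u₀ : ℝ → ℝ)
    (hmem : ∀ n, MemLp (u n) ⊤ (volume.restrict (Set.Ioo 0 1)))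
    (hmem₀ : MemLp u₀ ⊤ (volume.restrict (Set.Ioo 0 1)))
    (hbd : ∀ n, eLpNorm (u n) ⊤ (volume.restrict (Set.Ioo 0 1)) ≤ ENNReal.ofReal C)
    (hconv : ∀ v : ℝ → ℝ, IntegrableOn v (Set.Ioo (0:ℝ) 1) →
      Tendsto (fun n => ∫ x in Set.Ioo (0:ℝ) 1, u n x * v x) atTop
        (𝓝 (∫ x in Set.Ioo (0:ℝ) 1, u₀ x * v x))) :
    Tendsto
      (fun n => eLpNorm
        (fun x => Real.exp (∫ t in (0:ℝ)..x, u n t) - Real.exp (∫ t in (0:ℝ)..x, u₀ t)) ⊤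
        (volume.restrict (Set.Ioo 0 1)))
      atTop (𝓝 0) := by
  set μ := volume.restrict (Set.Ioo (0:ℝ) 1) with hμ
  have hfin : IsFiniteMeasure μ := by
    constructor
    rw [hμ, Measure.restrict_apply_univ, Real.volume_Ioo]
    exact ENNReal.ofReal_lt_top
  -- the uniform bound
  set M₀ : ℝ := (eLpNorm u₀ ⊤ μ).toReal with hM₀
  set M : ℝ := max (max C M₀) 0 with hMdef
  have hM0 : 0 ≤ M := le_max_right _ _
  -- a.e. bounds
  have hae : ∀ n, ∀ᵐ x ∂(volume : Measure ℝ), x ∈ Set.Ioo (0:ℝ) 1 → ‖u n x‖ ≤ M := by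
    intro n
    rw [← ae_restrict_iff' measurableSet_Ioo]
    have h1 : ∀ᵐ x ∂μ, (‖u n x‖₊ : ENNReal) ≤ eLpNormEssSup (u n) μ := ae_le_eLpNormEssSup
    filter_upwards [h1] with x hx
    have h2 : (‖u n x‖₊ : ENNReal) ≤ ENNReal.ofReal M := by
      refine hx.trans (le_trans ?_ (ENNReal.ofReal_le_ofReal (le_trans (le_max_left _ _) (le_max_left _ _))))
      rw [← eLpNorm_exponent_top]; exact hbd n
    have := ENNReal.toReal_le_toReal (by simp) (ENNReal.ofReal_ne_top) |>.2 h2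
    simpa [ENNReal.toReal_ofReal hM0] using this
  have hae₀ : ∀ᵐ x ∂(volume : Measure ℝ), x ∈ Set.Ioo (0:ℝ) 1 → ‖u₀ x‖ ≤ M := by
    rw [← ae_restrict_iff' measurableSet_Ioo]
    have h1 : ∀ᵐ x ∂μ, (‖u₀ x‖₊ : ENNReal) ≤ eLpNormEssSup u₀ μ := ae_le_eLpNormEssSup
    filter_upwards [h1] with x hx
    have htop : eLpNormEssSup u₀ μ ≠ ⊤ := by
      have := hmem₀.2; rw [eLpNorm_exponent_top] at this; exact this.ne
    have := ENNReal.toReal_le_toReal (by simp) htop |>.2 hx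
    simp only [ENNReal.coe_toReal, coe_nnnorm] at this
    exact this.trans (le_trans (by rw [hM₀, eLpNorm_exponent_top]) (le_trans (le_max_right C M₀) (le_max_left _ _)))
  -- interval-type a.e. bounds
  have haeI : ∀ (w : ℝ → ℝ), (∀ᵐ x ∂(volume : Measure ℝ), x ∈ Set.Ioo (0:ℝ) 1 → ‖w x‖ ≤ M) →
      ∀ x y : ℝ, x ∈ Set.Icc (0:ℝ) 1 → y ∈ Set.Icc (0:ℝ) 1 →
      ∀ᵐ t ∂(volume : Measure ℝ), t ∈ Set.uIoc x y → ‖w t‖ ≤ M := by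
    intro w hw x y hx hy
    have h1 : ∀ᵐ t ∂(volume : Measure ℝ), t ≠ 1 := by
      rw [ae_iff]
      simpa using Real.volume_singleton (a := 1)
    filter_upwards [hw, h1] with t ht ht1 htmem
    apply ht
    rcases Set.mem_uIoc.1 htmem with ⟨h1', h2'⟩ | ⟨h1', h2'⟩
    · exact ⟨lt_of_le_of_lt hx.1 h1', lt_of_le_of_ne (le_trans h2' hy.2) ht1⟩
    · exact ⟨lt_of_le_of_lt hy.1 h1', lt_of_le_of_ne (le_trans h2' hx.2) ht1⟩
  -- Lipschitz bounds for the primitives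
  have hlip : ∀ (w : ℝ → ℝ), (∀ᵐ x ∂(volume : Measure ℝ), x ∈ Set.Ioo (0:ℝ) 1 → ‖w x‖ ≤ M) →
      ∀ x y : ℝ, x ∈ Set.Icc (0:ℝ) 1 → y ∈ Set.Icc (0:ℝ) 1 →
      |(∫ t in y..x, w t)| ≤ M * |x - y| := by
    intro w hw x y hx hy
    have := intervalIntegral.norm_integral_le_of_norm_le_const_ae (a := y) (b := x) (C := M)
      (f := w) (haeI w hw y x hy hx)
    simpa [Real.norm_eq_abs] using this
  -- integrability
  have hIntOn : ∀ (w : ℝ → ℝ), MemLp w ⊤ μ → IntegrableOn w (Set.Ioo (0:ℝ) 1) volume := by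
    intro w hw
    have := hw.mono_exponent (p := 1) le_top
    exact (memLp_one_iff_integrable.1 this)
  have hII : ∀ (w : ℝ → ℝ), MemLp w ⊤ μ → ∀ x ∈ Set.Icc (0:ℝ) 1,
      IntervalIntegrable w volume 0 x := by
    intro w hw x hx
    rw [intervalIntegrable_iff_integrableOn_Ioc_of_le hx.1]
    have h1 : IntegrableOn w (Set.Ioo (0:ℝ) x) volume :=
      (hIntOn w hw).mono_set (Set.Ioo_subset_Ioo le_rfl hx.2)
    exact h1.congr_set_ae Ioo_ae_eq_Ioc.symm
  -- the primitives, on the compact unit interval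
  set X := Set.Icc (0:ℝ) 1
  have hXc : CompactSpace X := isCompact_iff_compactSpace.mp isCompact_Icc
  set F : ℕ → X → ℝ := fun n x => ∫ t in (0:ℝ)..(x:ℝ), u n t with hF
  set f : X → ℝ := fun x => ∫ t in (0:ℝ)..(x:ℝ), u₀ t with hf
  -- equicontinuity
  have hmem01 : (0:ℝ) ∈ Set.Icc (0:ℝ) 1 := by constructor <;> norm_num
  have hdist : ∀ n (x y : X), dist (F n x) (F n y) ≤ M * dist x y := by
    intro n x y
    have hsub : F n x - F n y = ∫ t in (y:ℝ)..(x:ℝ), u n t := by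
      rw [hF]
      exact intervalIntegral.integral_interval_sub_left (hII _ (hmem n) _ x.2) (hII _ (hmem n) _ y.2)
    rw [Real.dist_eq, hsub]
    have := hlip (u n) (hae n) x y x.2 y.2
    simpa [Subtype.dist_eq, Real.dist_eq] using this
  have hequi : Equicontinuous F := by
    apply Metric.equicontinuous_of_continuity_modulus (fun t => M * t)
    · have : Tendsto (fun t : ℝ => M * t) (𝓝 0) (𝓝 (M * 0)) :=
        (tendsto_const_nhds.mul tendsto_id)
      simpa using this
    · intro x y n; exact hdist n x y
  -- pointwise convergence
  have hpt : Tendsto F atTop (𝓝 f) := by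
    rw [tendsto_pi_nhds]
    intro x
    have hx1 : (x:ℝ) ≤ 1 := x.2.2
    have hx0 : (0:ℝ) ≤ (x:ℝ) := x.2.1
    set v : ℝ → ℝ := Set.indicator (Set.Ioo 0 (x:ℝ)) (fun _ => (1:ℝ)) with hv
    have hvint : IntegrableOn v (Set.Ioo (0:ℝ) 1) volume := by
      rw [hv]
      exact (integrable_const (1:ℝ)).indicator measurableSet_Ioo
    have key : ∀ (w : ℝ → ℝ), MemLp w ⊤ μ →
        (∫ t in Set.Ioo (0:ℝ) 1, w t * v t) = ∫ t in (0:ℝ)..(x:ℝ), w t := by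
      intro w hw
      have h1 : (fun t => w t * v t) = Set.indicator (Set.Ioo 0 (x:ℝ)) w := by
        funext t
        rw [hv]
        by_cases ht : t ∈ Set.Ioo 0 (x:ℝ) <;> simp [Set.indicator_apply, ht]
      rw [h1, integral_indicator measurableSet_Ioo, ← hμ, Measure.restrict_restrict measurableSet_Ioo,
        Set.inter_eq_left.2 (Set.Ioo_subset_Ioo le_rfl hx1),
        ← integral_Ioc_eq_integral_Ioo, intervalIntegral.integral_of_le hx0]
    have := hconv v hvint
    rw [key u₀ hmem₀] at this
    exact this.congr (fun n => key (u n) (hmem n))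
  -- uniform convergence
  have hUnif : TendstoUniformly F f atTop := by
    exact UniformFun.tendsto_iff_tendstoUniformly.mp
      ((hequi.tendsto_uniformFun_iff_pi atTop f).2 hpt)
  -- bounds on the primitives
  have hGbd : ∀ (w : ℝ → ℝ), (∀ᵐ x ∂(volume : Measure ℝ), x ∈ Set.Ioo (0:ℝ) 1 → ‖w x‖ ≤ M) →
      ∀ x : X, |(∫ t in (0:ℝ)..(x:ℝ), w t)| ≤ M := by
    intro w hw x
    have := hlip w hw (x:ℝ) 0 x.2 hmem01
    have hb : |(x:ℝ) - 0| ≤ 1 := by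
      rw [sub_zero, abs_of_nonneg x.2.1]; exact x.2.2
    calc |(∫ t in (0:ℝ)..(x:ℝ), w t)| ≤ M * |(x:ℝ) - 0| := this
      _ ≤ M * 1 := mul_le_mul_of_nonneg_left hb hM0
      _ = M := mul_one M
  -- conclusion
  rw [ENNReal.tendsto_atTop_zero]
  intro ε hε
  set ε' := min ε 1 with hε'
  have hε'0 : 0 < ε' := lt_min hε zero_lt_one
  have hε'top : ε' ≠ ⊤ := ne_top_of_le_ne_top (by simp) (min_le_right _ _)
  have hε'r : 0 < ε'.toReal := ENNReal.toReal_pos hε'0.ne' hε'top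
  set δ : ℝ := ε'.toReal / (Real.exp M + 1) with hδ
  have hδ0 : 0 < δ := div_pos hε'r (by positivity)
  have := Metric.tendstoUniformly_iff.1 hUnif δ hδ0
  rw [eventually_atTop] at this
  obtain ⟨N, hN⟩ := this
  refine ⟨N, fun n hn => ?_⟩
  have hbound : ∀ᵐ x ∂μ, ‖Real.exp (∫ t in (0:ℝ)..x, u n t) - Real.exp (∫ t in (0:ℝ)..x, u₀ t)‖
      ≤ Real.exp M * δ := by
    rw [hμ, ae_restrict_iff' measurableSet_Ioo]
    apply ae_of_all
    intro x hx
    have hxX : x ∈ X := Set.Ioo_subset_Icc_self hx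
    have h1 : |(∫ t in (0:ℝ)..x, u n t)| ≤ M := hGbd (u n) (hae n) ⟨x, hxX⟩
    have h2 : |(∫ t in (0:ℝ)..x, u₀ t)| ≤ M := hGbd u₀ hae₀ ⟨x, hxX⟩
    have h3 := hN n hn ⟨x, hxX⟩
    rw [Real.dist_eq] at h3
    have h4 := exp_lip (abs_le.1 h1).2 (abs_le.1 h2).2
    rw [Real.norm_eq_abs]
    refine h4.trans ?_
    apply mul_le_mul_of_nonneg_left _ (Real.exp_pos M).le
    rw [abs_sub_comm]
    exact h3.le
  have hle : eLpNorm (fun x => Real.exp (∫ t in (0:ℝ)..x, u n t)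
      - Real.exp (∫ t in (0:ℝ)..x, u₀ t)) ⊤ μ ≤ ENNReal.ofReal (Real.exp M * δ) := by
    rw [eLpNorm_exponent_top]
    exact eLpNormEssSup_le_of_ae_bound hbound
  refine hle.trans (le_trans ?_ (min_le_left ε 1))
  have hcalc : Real.exp M * δ ≤ ε'.toReal := by
    rw [hδ, mul_div_assoc']
    rw [div_le_iff₀ (by positivity)]
    nlinarith [Real.exp_pos M, hε'r]
  calc ENNReal.ofReal (Real.exp M * δ) ≤ ENNReal.ofReal ε'.toReal :=
        ENNReal.ofReal_le_ofReal hcalc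
    _ = ε' := ENNReal.ofReal_toReal hε'top
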